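/- Let q = 2^m and let k, i be positive integers. Then f(x) = x^{2^k+1} + x^{(2^k+1)q} + x^{(2^k+1)q^2} + x^{2^i} + x^{2^i q} is a permutation polynomial of F_{q^3} if and only if gcd(2^k+1, q-1) = 1. -/

import Mathlib

private lemma pow_two_pow_mul {M : Type*} [Monoid M] (x : M) (s : ℕ) (hx : x ^ 2 ^ s = x) :
    ∀ j, x ^ 2 ^ (s * j) = x := by
  intro j
  induction j with
  | zero => simp
  | succ j ih => rw [Nat.mul_succ, pow_add, pow_mul, ih, hx]

private lemma gcd_pow_fix {M : Type*} [Monoid M] (x : M) :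
    ∀ s t : ℕ, x ^ 2 ^ s = x → x ^ 2 ^ t = x → x ^ 2 ^ Nat.gcd s t = x := by
  intro s
  induction s using Nat.strong_induction_on with
  | _ s ih =>
    intro t hs ht
    rcases Nat.eq_zero_or_pos s with h0 | hpos
    · subst h0; simpa using ht
    · rw [Nat.gcd_rec]
      have hmod : x ^ 2 ^ (t % s) = x := by
        have hdm : s * (t / s) + t % s = t := Nat.div_add_mod t s
        calc x ^ 2 ^ (t % s) = (x ^ 2 ^ (s * (t / s))) ^ 2 ^ (t % s) := by
              rw [pow_two_pow_mul x s hs]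
          _ = x ^ (2 ^ (s * (t / s)) * 2 ^ (t % s)) := by rw [← pow_mul]
          _ = x ^ 2 ^ t := by rw [← pow_add, hdm]
          _ = x := ht
      exact ih (t % s) (Nat.mod_lt t hpos) s hmod hs

private lemma nt_gcd_dvd (m k : ℕ) (hm : 0 < m) (hk : 0 < k)
    (h : Nat.gcd (2 ^ k + 1) (2 ^ m - 1) = 1) : Nat.gcd m (2 * k) ∣ k := by
  set d := Nat.gcd m k with hd
  have hdk : d ∣ k := Nat.gcd_dvd_right m k
  have hdm : d ∣ m := Nat.gcd_dvd_left m k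
  have hdpos : 0 < d := Nat.gcd_pos_of_pos_left k hm
  have hdg : d ∣ Nat.gcd m (2 * k) := Nat.dvd_gcd hdm (hdk.mul_left 2)
  have hg2d : Nat.gcd m (2 * k) ∣ 2 * d := by
    have h1 : Nat.gcd m (2 * k) ∣ Nat.gcd (2 * m) (2 * k) :=
      Nat.gcd_dvd_gcd_of_dvd_left (2 * k) (dvd_mul_left m 2)
    rwa [Nat.gcd_mul_left] at h1
  obtain ⟨e, he⟩ := hdg
  have he2 : e ∣ 2 := by
    have h2 : d * e ∣ 2 * d := he ▸ hg2d
    rw [mul_comm 2 d] at h2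
    exact (Nat.mul_dvd_mul_iff_left hdpos).mp h2
  rcases (Nat.prime_two.eq_one_or_self_of_dvd e he2) with he1 | he1
  · rw [he, he1, mul_one]; exact hdk
  · -- g = 2 * d
    subst he1
    by_cases h2dk : 2 * d ∣ k
    · rw [he, mul_comm]; exact h2dk
    · exfalso
      obtain ⟨j, hj⟩ := hdk
      have hjodd : Odd j := by
        rcases Nat.even_or_odd j with hje | hjo
        · obtain ⟨j', hj'⟩ := hje
          exact (h2dk ⟨j', by rw [hj, hj']; ring⟩).elim
        · exact hjo
      have h2dm : 2 * d ∣ m := by rw [mul_comm]; exact he ▸ Nat.gcd_dvd_left m (2 * k)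
      set p := 2 ^ d + 1 with hp
      have hp1 : p ∣ 2 ^ k + 1 := by
        have := Odd.nat_add_dvd_pow_add_pow (2 ^ d) 1 hjodd
        simpa [← pow_mul, ← hj] using this
      have hp2 : p ∣ 2 ^ m - 1 := by
        obtain ⟨l, hl⟩ := h2dm
        have hstep : 2 ^ (2 * d) - 1 ∣ 2 ^ m - 1 := by
          have := Nat.sub_dvd_pow_sub_pow (2 ^ (2 * d)) 1 l
          simpa [← pow_mul, ← hl] using this
        refine dvd_trans ?_ hstep
        refine ⟨2 ^ d - 1, ?_⟩
        have h1 : 1 ≤ 2 ^ d := Nat.one_le_two_pow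
        have h2 : (2:ℕ) ^ (2 * d) = 2 ^ d * 2 ^ d := by rw [two_mul, pow_add]
        zify [h1, Nat.one_le_two_pow] at *
        rw [h2]; push_cast [h1]; rw [hp]; ring
      have hple : p ∣ 1 := h ▸ Nat.dvd_gcd hp1 hp2
      have h3 : 1 < 2 ^ d := Nat.one_lt_two_pow_iff.mpr hdpos.ne'
      have := Nat.dvd_one.mp hple
      omega
theorem stmt_8 (m k i : ℕ) (hm : 0 < m) (hk : 0 < k) (hi : 0 < i) (q : ℕ) (hq : q = 2 ^ m)
    (F : Type*) [Field F] [Fintype F] (hF : Fintype.card F = q ^ 3) :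
    Function.Bijective
      (fun x : F => x ^ (2 ^ k + 1) + x ^ ((2 ^ k + 1) * q) + x ^ ((2 ^ k + 1) * q ^ 2)
        + x ^ (2 ^ i) + x ^ (2 ^ i * q))
      ↔ Nat.gcd (2 ^ k + 1) (q - 1) = 1 := by
  have hq1 : 1 ≤ q := by rw [hq]; exact Nat.one_le_two_pow
  -- characteristic 2
  have hcp : CharP F (ringChar F) := ringChar.charP F
  obtain ⟨n, hp, hcard⟩ := FiniteField.card F (ringChar F)
  have hdvd : ringChar F ∣ 2 ^ (m * 3) := by
    have hh : (ringChar F) ^ (n : ℕ) = 2 ^ (m * 3) := by rw [← hcard, hF, hq, ← pow_mul]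
    exact hh ▸ dvd_pow_self (ringChar F) n.pos.ne'
  have h2c : ringChar F = 2 :=
    (Nat.prime_dvd_prime_iff_eq hp Nat.prime_two).mp (hp.dvd_of_dvd_pow hdvd)
  haveI : CharP F 2 := h2c ▸ hcp
  haveI : Fact (Nat.Prime 2) := ⟨Nat.prime_two⟩
  have two0 : (2 : F) = 0 := by exact_mod_cast CharP.cast_eq_zero F 2
  have hf2 : ∀ (n : ℕ) (x y : F), (x + y) ^ 2 ^ n = x ^ 2 ^ n + y ^ 2 ^ n :=
    fun n x y => add_pow_char_pow x y 2 n
  have hfq : ∀ x y : F, (x + y) ^ q = x ^ q + y ^ q := by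
    intro x y; rw [hq]; exact add_pow_char_pow x y 2 m
  have hfq2 : ∀ x y : F, (x + y) ^ q ^ 2 = x ^ q ^ 2 + y ^ q ^ 2 := by
    intro x y
    rw [hq, show ((2:ℕ) ^ m) ^ 2 = 2 ^ (m * 2) from (pow_mul 2 m 2).symm]
    exact add_pow_char_pow x y 2 (m * 2)
  have hinj2 : ∀ (n : ℕ) (x y : F), x ^ 2 ^ n = y ^ 2 ^ n → x = y := by
    intro n x y h
    have hs : (x - y) ^ 2 ^ n = 0 := by
      rw [sub_pow_char_pow, h, sub_self]
    exact sub_eq_zero.mp (pow_eq_zero_iff (Nat.pos_of_ne_zero (by positivity)).ne' |>.mp hs)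
  have hq3 : ∀ x : F, x ^ q ^ 3 = x := by intro x; rw [← hF]; exact FiniteField.pow_card x
  constructor
  · -- bijective → gcd = 1
    intro hbij
    by_contra hg
    classical
    obtain ⟨p, hpp, hpd⟩ := Nat.exists_prime_and_dvd hg
    have hpN : p ∣ 2 ^ k + 1 := hpd.trans (Nat.gcd_dvd_left _ _)
    have hpq1 : p ∣ q - 1 := hpd.trans (Nat.gcd_dvd_right _ _)
    haveI : Fact p.Prime := ⟨hpp⟩
    have hcardU : p ∣ Fintype.card Fˣ := by
      rw [Fintype.card_units, hF]
      exact hpq1.trans (by simpa using Nat.sub_dvd_pow_sub_pow q 1 3)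
    obtain ⟨z, hz⟩ := exists_prime_orderOf_dvd_card p hcardU
    have hz1 : z ≠ 1 := by
      intro h; rw [h, orderOf_one] at hz; exact hpp.ne_one hz.symm
    have hzp : (z : F) ^ p = 1 := by
      have h1 := pow_orderOf_eq_one z
      rw [hz] at h1
      have h2 : ((z ^ p : Fˣ) : F) = 1 := by rw [h1]; rfl
      simpa using h2
    have hzN : (z : F) ^ (2 ^ k + 1) = 1 := by
      obtain ⟨s, hs⟩ := hpN; rw [hs, pow_mul, hzp, one_pow]
    have hzq : (z : F) ^ q = (z : F) := by
      obtain ⟨s, hs⟩ := hpq1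
      have h1 : (z : F) ^ (q - 1) = 1 := by rw [hs, pow_mul, hzp, one_pow]
      calc (z : F) ^ q = (z : F) ^ (q - 1 + 1) := by rw [Nat.sub_add_cancel hq1]
        _ = (z : F) ^ (q - 1) * (z : F) := pow_succ _ _
        _ = (z : F) := by rw [h1, one_mul]
    have hfz : (fun x : F => x ^ (2 ^ k + 1) + x ^ ((2 ^ k + 1) * q) + x ^ ((2 ^ k + 1) * q ^ 2)
        + x ^ (2 ^ i) + x ^ (2 ^ i * q)) (z : F)
        = (fun x : F => x ^ (2 ^ k + 1) + x ^ ((2 ^ k + 1) * q) + x ^ ((2 ^ k + 1) * q ^ 2)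
        + x ^ (2 ^ i) + x ^ (2 ^ i * q)) 1 := by
      show (z:F) ^ (2 ^ k + 1) + (z:F) ^ ((2 ^ k + 1) * q) + (z:F) ^ ((2 ^ k + 1) * q ^ 2)
        + (z:F) ^ (2 ^ i) + (z:F) ^ (2 ^ i * q)
        = (1:F) ^ (2 ^ k + 1) + (1:F) ^ ((2 ^ k + 1) * q) + (1:F) ^ ((2 ^ k + 1) * q ^ 2)
        + (1:F) ^ (2 ^ i) + (1:F) ^ (2 ^ i * q)
      rw [one_pow, one_pow, one_pow, one_pow, one_pow]
      rw [pow_mul (z:F) (2 ^ k + 1) q, pow_mul (z:F) (2 ^ k + 1) (q ^ 2),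
        mul_comm (2 ^ i) q, pow_mul (z:F) q (2 ^ i), hzq, hzN, one_pow, one_pow]
      linear_combination ((z:F) ^ (2 ^ i) - 1) * two0
    have hz1' := hbij.injective hfz
    exact hz1 (Units.ext (by simpa using hz1' : (z : F) = ((1 : Fˣ) : F)))
  · -- gcd = 1 → bijective
    intro hgcd
    rw [← Finite.injective_iff_bijective]
    intro a b hab
    simp only at hab
    -- the two "trace-component" identities
    have key : ∀ x : F, (x ^ (2 ^ k + 1) + x ^ ((2 ^ k + 1) * q) + x ^ ((2 ^ k + 1) * q ^ 2)
        + x ^ (2 ^ i) + x ^ (2 ^ i * q)) ^ q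
        = x ^ ((2 ^ k + 1) * q) + x ^ ((2 ^ k + 1) * q ^ 2) + x ^ (2 ^ k + 1)
          + x ^ (2 ^ i * q) + x ^ (2 ^ i * q ^ 2) := by
      intro x
      rw [hfq, hfq, hfq, hfq]
      rw [← pow_mul, ← pow_mul, ← pow_mul, ← pow_mul, ← pow_mul]
      have t3 : x ^ ((2 ^ k + 1) * q ^ 2 * q) = x ^ (2 ^ k + 1) := by
        rw [show (2 ^ k + 1) * q ^ 2 * q = q ^ 3 * (2 ^ k + 1) by ring, pow_mul, hq3]
      rw [t3, show (2 ^ k + 1) * q * q = (2 ^ k + 1) * q ^ 2 by ring,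
        show 2 ^ i * q * q = 2 ^ i * q ^ 2 by ring]
    have key2 : ∀ x : F, (x ^ (2 ^ k + 1) + x ^ ((2 ^ k + 1) * q) + x ^ ((2 ^ k + 1) * q ^ 2)
        + x ^ (2 ^ i) + x ^ (2 ^ i * q)) ^ q ^ 2
        = x ^ ((2 ^ k + 1) * q ^ 2) + x ^ (2 ^ k + 1) + x ^ ((2 ^ k + 1) * q)
          + x ^ (2 ^ i * q ^ 2) + x ^ (2 ^ i) := by
      intro x
      rw [hfq2, hfq2, hfq2, hfq2]
      rw [← pow_mul, ← pow_mul, ← pow_mul, ← pow_mul, ← pow_mul]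
      have t2 : x ^ ((2 ^ k + 1) * q * q ^ 2) = x ^ (2 ^ k + 1) := by
        rw [show (2 ^ k + 1) * q * q ^ 2 = q ^ 3 * (2 ^ k + 1) by ring, pow_mul, hq3]
      have t3 : x ^ ((2 ^ k + 1) * q ^ 2 * q ^ 2) = x ^ ((2 ^ k + 1) * q) := by
        rw [show (2 ^ k + 1) * q ^ 2 * q ^ 2 = q ^ 3 * ((2 ^ k + 1) * q) by ring, pow_mul, hq3]
      have t5 : x ^ (2 ^ i * q * q ^ 2) = x ^ 2 ^ i := by
        rw [show 2 ^ i * q * q ^ 2 = q ^ 3 * 2 ^ i by ring, pow_mul, hq3]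
      rw [t2, t3, t5]
    have h1 : a ^ ((2 ^ k + 1) * q) + a ^ ((2 ^ k + 1) * q ^ 2) + a ^ (2 ^ k + 1)
          + a ^ (2 ^ i * q) + a ^ (2 ^ i * q ^ 2)
        = b ^ ((2 ^ k + 1) * q) + b ^ ((2 ^ k + 1) * q ^ 2) + b ^ (2 ^ k + 1)
          + b ^ (2 ^ i * q) + b ^ (2 ^ i * q ^ 2) := by
      rw [← key a, ← key b, hab]
    have h2 : a ^ ((2 ^ k + 1) * q ^ 2) + a ^ (2 ^ k + 1) + a ^ ((2 ^ k + 1) * q)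
          + a ^ (2 ^ i * q ^ 2) + a ^ (2 ^ i)
        = b ^ ((2 ^ k + 1) * q ^ 2) + b ^ (2 ^ k + 1) + b ^ ((2 ^ k + 1) * q)
          + b ^ (2 ^ i * q ^ 2) + b ^ (2 ^ i) := by
      rw [← key2 a, ← key2 b, hab]
    have E1 : a + a ^ q ^ 2 = b + b ^ q ^ 2 := by
      apply hinj2 i
      rw [hf2, hf2]
      linear_combination hab - h1 + (a ^ (2 ^ i * q ^ 2) - b ^ (2 ^ i * q ^ 2)) * two0
    have E2 : a ^ q + a ^ q ^ 2 = b ^ q + b ^ q ^ 2 := by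
      apply hinj2 i
      rw [hf2, hf2]
      linear_combination hab - h2 + (a ^ (2 ^ i * q ^ 2) - b ^ (2 ^ i * q ^ 2)) * two0
    obtain ⟨c, hcdef⟩ : ∃ c : F, c = a + b := ⟨_, rfl⟩
    have hc_q2 : c ^ q ^ 2 = c := by
      rw [hcdef, hfq2]
      linear_combination E1 + (b ^ q ^ 2 - a) * two0
    have hc_q : c ^ q = c := by
      rw [hcdef, hfq]
      have hc2' : a ^ q ^ 2 + b ^ q ^ 2 = a + b := by
        have := hc_q2; rw [hcdef, hfq2] at this; exact this
      linear_combination E2 + hc2' + (b ^ q - a ^ q ^ 2) * two0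
    have hb : b = a + c := by rw [hcdef]; linear_combination (-a) * two0
    have hbq : b ^ q = a ^ q + c := by rw [hb, hfq, hc_q]
    have hbq2 : b ^ q ^ 2 = a ^ q ^ 2 + c := by rw [hb, hfq2, hc_q2]
    have exp1 : b ^ (2 ^ k + 1) = (a ^ 2 ^ k + c ^ 2 ^ k) * (a + c) := by
      rw [hb, pow_succ, hf2]
    have exp2 : b ^ ((2 ^ k + 1) * q) = ((a ^ q) ^ 2 ^ k + c ^ 2 ^ k) * (a ^ q + c) := by
      rw [mul_comm (2 ^ k + 1) q, pow_mul, hbq, pow_succ, hf2]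
    have exp3 : b ^ ((2 ^ k + 1) * q ^ 2)
        = ((a ^ q ^ 2) ^ 2 ^ k + c ^ 2 ^ k) * (a ^ q ^ 2 + c) := by
      rw [mul_comm (2 ^ k + 1) (q ^ 2), pow_mul, hbq2, pow_succ, hf2]
    have exp4 : b ^ 2 ^ i = a ^ 2 ^ i + c ^ 2 ^ i := by rw [hb, hf2]
    have exp5 : b ^ (2 ^ i * q) = (a ^ q) ^ 2 ^ i + c ^ 2 ^ i := by
      rw [mul_comm (2 ^ i) q, pow_mul, hbq, hf2]
    obtain ⟨t, htdef⟩ : ∃ t : F, t = a + a ^ q + a ^ q ^ 2 := ⟨_, rfl⟩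
    have main : c * t ^ 2 ^ k + c ^ 2 ^ k * t + c ^ 2 ^ k * c = 0 := by
      have tk : t ^ 2 ^ k = a ^ 2 ^ k + (a ^ q) ^ 2 ^ k + (a ^ q ^ 2) ^ 2 ^ k := by
        rw [htdef, hf2, hf2]
      rw [tk, htdef]
      rw [exp1, exp2, exp3, exp4, exp5] at hab
      linear_combination (-1 : F) * hab - (c ^ 2 ^ k * c + c ^ 2 ^ i) * two0
    by_cases hc0 : c = 0
    · rw [hcdef] at hc0
      linear_combination hc0 + (-b) * two0
    · exfalso
      obtain ⟨u, hudef⟩ : ∃ u : F, u = t * c⁻¹ := ⟨_, rfl⟩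
      have hck : c ^ 2 ^ k ≠ 0 := pow_ne_zero _ hc0
      have hukk : u ^ 2 ^ k = u + 1 := by
        have hinv1 : c ^ 2 ^ k * (c ^ 2 ^ k)⁻¹ = 1 := mul_inv_cancel₀ hck
        have hinv2 : c * c⁻¹ = 1 := mul_inv_cancel₀ hc0
        apply mul_left_cancel₀ (mul_ne_zero hck hc0)
        rw [hudef, mul_pow, inv_pow]
        linear_combination (c * t ^ 2 ^ k) * hinv1 - (c ^ 2 ^ k * t) * hinv2 - main
          + (c * t ^ 2 ^ k) * two0
      have htq : t ^ q = t := by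
        rw [htdef, hfq, hfq]
        have h5 : (a ^ q ^ 2) ^ q = a := by
          rw [← pow_mul, show q ^ 2 * q = q ^ 3 by ring, hq3]
        rw [h5]; ring
      have huq : u ^ q = u := by rw [hudef, mul_pow, htq, inv_pow, hc_q]
      have humq : u ^ 2 ^ m = u := by rw [← hq]; exact huq
      have hu2k : u ^ 2 ^ (2 * k) = u := by
        calc u ^ 2 ^ (2 * k) = (u ^ 2 ^ k) ^ 2 ^ k := by rw [two_mul, pow_add, pow_mul]
          _ = (u + 1) ^ 2 ^ k := by rw [hukk]
          _ = u ^ 2 ^ k + 1 := by rw [hf2, one_pow]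
          _ = u := by rw [hukk]; linear_combination two0
      have hg := gcd_pow_fix u m (2 * k) humq hu2k
      have hdk : Nat.gcd m (2 * k) ∣ k := nt_gcd_dvd m k hm hk (by rw [← hq]; exact hgcd)
      obtain ⟨j, hjk⟩ := hdk
      have hfix : u ^ 2 ^ k = u := by
        rw [hjk]; exact pow_two_pow_mul u _ hg j
      rw [hukk] at hfix
      exact one_ne_zero (α := F) (by linear_combination hfix)
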